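/- Let x* ∈ C minimize a constrained regularized least-squares problem x_{n,λ} = argmin_{x∈C} Σ_{i=1}^n ‖y_i − A_i x‖² + λ‖x‖², where C is nonempty closed convex and y_i = A_i x* + ε_i. Then the minimizer satisfies the deterministic inequality ‖x_{n,λ} − x*‖_{M̄_n} ≤ ‖Σ_{i=1}^n A_i* ε_i‖_{M̄_n⁻¹} + λ‖x*‖_{M̄_n⁻¹}, where M̄_n = Σ_{i=1}^n A_i* A_i + λ id. -/

import Mathlib

open Matrix

private lemma dps {k : ℕ} (v : Fin k → ℝ) : 0 ≤ v ⬝ᵥ v :=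
  Finset.sum_nonneg fun _ _ => mul_self_nonneg _

private lemma sum_mv {k l : ℕ} {s : Finset ℕ} (M : ℕ → Matrix (Fin k) (Fin l) ℝ)
    (v : Fin l → ℝ) : (∑ i ∈ s, M i) *ᵥ v = ∑ i ∈ s, (M i *ᵥ v) := by
  induction s using Finset.cons_induction with
  | empty => simp
  | cons a s ha ih => rw [Finset.sum_cons, Finset.sum_cons, Matrix.add_mulVec, ih]

private lemma sum_dp {k : ℕ} {s : Finset ℕ} (v : ℕ → Fin k → ℝ) (w : Fin k → ℝ) :
    (∑ i ∈ s, v i) ⬝ᵥ w = ∑ i ∈ s, (v i ⬝ᵥ w) := by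
  induction s using Finset.cons_induction with
  | empty => simp
  | cons a s ha ih => rw [Finset.sum_cons, Finset.sum_cons, add_dotProduct, ih]

private lemma cs {k : ℕ} {B : Matrix (Fin k) (Fin k) ℝ} (hB : B.PosSemidef)
    (u w : Fin k → ℝ) :
    u ⬝ᵥ (B *ᵥ w) ≤ Real.sqrt (u ⬝ᵥ (B *ᵥ u)) * Real.sqrt (w ⬝ᵥ (B *ᵥ w)) := by
  have hBt : Bᵀ = B := by
    have := hB.1
    rwa [Matrix.IsHermitian, conjTranspose_eq_transpose_of_trivial] at this
  have hsym : ∀ a b : Fin k → ℝ, b ⬝ᵥ (B *ᵥ a) = a ⬝ᵥ (B *ᵥ b) := by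
    intro a b
    rw [dotProduct_mulVec, ← mulVec_transpose, hBt, dotProduct_comm]
  have hnn : ∀ x : Fin k → ℝ, 0 ≤ x ⬝ᵥ (B *ᵥ x) := by
    intro x; simpa using hB.dotProduct_mulVec_nonneg x
  have hquad : ∀ t : ℝ, 0 ≤ (w ⬝ᵥ (B *ᵥ w)) * (t * t) + (2 * (u ⬝ᵥ (B *ᵥ w))) * t
      + u ⬝ᵥ (B *ᵥ u) := by
    intro t
    have h0 := hnn (u + t • w)
    have hexp : (u + t • w) ⬝ᵥ (B *ᵥ (u + t • w)) =
        (w ⬝ᵥ (B *ᵥ w)) * (t * t) + (2 * (u ⬝ᵥ (B *ᵥ w))) * t + u ⬝ᵥ (B *ᵥ u) := by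
      simp only [Matrix.mulVec_add, Matrix.mulVec_smul, dotProduct_add, add_dotProduct,
        dotProduct_smul, smul_dotProduct, smul_eq_mul, hsym u w]
      ring
    linarith [hexp ▸ h0]
  have hd := discrim_le_zero hquad
  rw [discrim] at hd
  have hsq : (u ⬝ᵥ (B *ᵥ w)) ^ 2 ≤ (u ⬝ᵥ (B *ᵥ u)) * (w ⬝ᵥ (B *ᵥ w)) := by nlinarith
  calc u ⬝ᵥ (B *ᵥ w) ≤ |u ⬝ᵥ (B *ᵥ w)| := le_abs_self _
    _ = Real.sqrt ((u ⬝ᵥ (B *ᵥ w)) ^ 2) := (Real.sqrt_sq_eq_abs _).symm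
    _ ≤ Real.sqrt ((u ⬝ᵥ (B *ᵥ u)) * (w ⬝ᵥ (B *ᵥ w))) := Real.sqrt_le_sqrt hsq
    _ = _ := Real.sqrt_mul (hnn u) _

private lemma seg (g q : ℝ) (hq0 : 0 ≤ q)
    (key : ∀ t : ℝ, 0 < t → t ≤ 1 → 0 ≤ g + t * q) : 0 ≤ g := by
  by_contra hgneg
  push_neg at hgneg
  have hq1 : (0:ℝ) < q + 1 := by linarith
  have htpos : 0 < -g / (2 * (q + 1)) := div_pos (by linarith) (by linarith)
  have ht0 : 0 < min 1 (-g / (2 * (q + 1))) := lt_min one_pos htpos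
  have ht1 : min 1 (-g / (2 * (q + 1))) ≤ 1 := min_le_left _ _
  have h2 := key _ ht0 ht1
  have h3 : min 1 (-g / (2 * (q + 1))) ≤ -g / (2 * (q + 1)) := min_le_right _ _
  have h4 : min 1 (-g / (2 * (q + 1))) * q ≤ (-g / (2 * (q + 1))) * (q + 1) :=
    mul_le_mul h3 (by linarith) hq0 htpos.le
  have h5 : (-g / (2 * (q + 1))) * (q + 1) = -g / 2 := by
    field_simp
  rw [h5] at h4
  linarith

/-- Deterministic error bound for the constrained regularized least-squares minimizer:
`‖x_{n,λ} − x*‖_{M̄_n} ≤ ‖Σ A_i* ε_i‖_{M̄_n⁻¹} + λ‖x*‖_{M̄_n⁻¹}`. -/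
theorem stmt6 {dX dY : ℕ} (n : ℕ)
    (A : ℕ → Matrix (Fin dY) (Fin dX) ℝ) (ε : ℕ → Fin dY → ℝ)
    (y : ℕ → Fin dY → ℝ) (xstar : Fin dX → ℝ)
    (hy : ∀ i, y i = A i *ᵥ xstar + ε i)
    (C : Set (Fin dX → ℝ)) (hCne : C.Nonempty) (hCclosed : IsClosed C)
    (hCconvex : Convex ℝ C) (hxstar : xstar ∈ C)
    (lam : ℝ) (hlam : 0 < lam)
    (xh : Fin dX → ℝ) (hmem : xh ∈ C)
    (hmin : IsMinOn (fun x => ∑ i ∈ Finset.Icc 1 n,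
        ((y i - A i *ᵥ x) ⬝ᵥ (y i - A i *ᵥ x)) + lam * (x ⬝ᵥ x)) C xh)
    (Mbar : Matrix (Fin dX) (Fin dX) ℝ)
    (hMbar : Mbar = ∑ i ∈ Finset.Icc 1 n, (A i)ᵀ * A i + lam • 1) :
    Real.sqrt ((xh - xstar) ⬝ᵥ (Mbar *ᵥ (xh - xstar)))
      ≤ Real.sqrt ((∑ i ∈ Finset.Icc 1 n, (A i)ᵀ *ᵥ ε i) ⬝ᵥ
            (Mbar⁻¹ *ᵥ ∑ i ∈ Finset.Icc 1 n, (A i)ᵀ *ᵥ ε i))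
        + lam * Real.sqrt (xstar ⬝ᵥ (Mbar⁻¹ *ᵥ xstar)) := by
  set e := xh - xstar with hedef
  set dvec := xstar - xh with hddef
  set z := ∑ i ∈ Finset.Icc 1 n, (A i)ᵀ *ᵥ ε i with hzdef
  set S := ∑ i ∈ Finset.Icc 1 n, (A i)ᵀ * A i with hSdef
  -- positive definiteness
  have hSsd : S.PosSemidef := by
    rw [hSdef]
    refine Finset.sum_induction _ _ (fun a b ha hb => ha.add hb) Matrix.PosSemidef.zero ?_
    intro i _
    have := Matrix.posSemidef_conjTranspose_mul_self (A i)
    rwa [conjTranspose_eq_transpose_of_trivial] at this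
  have hl1 : ((lam • 1 : Matrix (Fin dX) (Fin dX) ℝ)).PosDef := by
    refine Matrix.PosDef.of_dotProduct_mulVec_pos ?_ ?_
    · rw [Matrix.IsHermitian, conjTranspose_eq_transpose_of_trivial, Matrix.transpose_smul,
        Matrix.transpose_one]
    · intro x hx
      have hxx : 0 < x ⬝ᵥ x := by
        have := (Matrix.dotProduct_star_self_pos_iff (v := x)).mpr hx
        simpa using this
      have : (lam • (1 : Matrix (Fin dX) (Fin dX) ℝ)) *ᵥ x = lam • x := by
        rw [Matrix.smul_mulVec, Matrix.one_mulVec]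
      rw [this]
      simpa [dotProduct_smul, smul_eq_mul] using mul_pos hlam hxx
  have hMpd : Mbar.PosDef := by rw [hMbar]; exact Matrix.PosDef.posSemidef_add hSsd hl1
  have hMinv : Mbar * Mbar⁻¹ = 1 :=
    Matrix.mul_nonsing_inv _ (isUnit_iff_ne_zero.mpr hMpd.det_pos.ne')
  have ha0 : 0 ≤ e ⬝ᵥ (Mbar *ᵥ e) := by simpa using hMpd.posSemidef.dotProduct_mulVec_nonneg e
  -- the first-order quantities
  set g : ℝ := 2 * (lam * (xh ⬝ᵥ dvec)
      - ∑ i ∈ Finset.Icc 1 n, ((y i - A i *ᵥ xh) ⬝ᵥ (A i *ᵥ dvec))) with hgdef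
  set q : ℝ := (∑ i ∈ Finset.Icc 1 n, ((A i *ᵥ dvec) ⬝ᵥ (A i *ᵥ dvec)))
      + lam * (dvec ⬝ᵥ dvec) with hqdef
  have hq0 : 0 ≤ q := by
    rw [hqdef]
    exact add_nonneg (Finset.sum_nonneg fun i _ => dps _) (mul_nonneg hlam.le (dps dvec))
  -- key variational inequality along the segment
  have key : ∀ t : ℝ, 0 < t → t ≤ 1 → 0 ≤ g + t * q := by
    intro t ht0 ht1
    have hmemt : xh + t • dvec ∈ C := by
      have h := hCconvex hmem hxstar (by linarith : (0:ℝ) ≤ 1 - t) ht0.le (by ring)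
      have heq : (1 - t) • xh + t • xstar = xh + t • dvec := by
        rw [hddef]; module
      rwa [heq] at h
    have hle := isMinOn_iff.mp hmin _ hmemt
    have hterm : ∀ i, (y i - A i *ᵥ (xh + t • dvec)) ⬝ᵥ (y i - A i *ᵥ (xh + t • dvec)) =
        (y i - A i *ᵥ xh) ⬝ᵥ (y i - A i *ᵥ xh)
          - 2 * t * ((y i - A i *ᵥ xh) ⬝ᵥ (A i *ᵥ dvec))
          + t ^ 2 * ((A i *ᵥ dvec) ⬝ᵥ (A i *ᵥ dvec)) := by
      intro i
      have h1 : y i - A i *ᵥ (xh + t • dvec) = (y i - A i *ᵥ xh) - t • (A i *ᵥ dvec) := by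
        rw [Matrix.mulVec_add, Matrix.mulVec_smul]; abel
      rw [h1]
      have hab1 : (A i *ᵥ dvec) ⬝ᵥ y i = y i ⬝ᵥ (A i *ᵥ dvec) := dotProduct_comm _ _
      have hab2 : (A i *ᵥ dvec) ⬝ᵥ (A i *ᵥ xh) = (A i *ᵥ xh) ⬝ᵥ (A i *ᵥ dvec) :=
        dotProduct_comm _ _
      simp only [sub_dotProduct, dotProduct_sub, smul_dotProduct, dotProduct_smul,
        smul_eq_mul, hab1, hab2]
      ring
    have hx2 : (xh + t • dvec) ⬝ᵥ (xh + t • dvec)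
        = xh ⬝ᵥ xh + 2 * t * (xh ⬝ᵥ dvec) + t ^ 2 * (dvec ⬝ᵥ dvec) := by
      have hc : dvec ⬝ᵥ xh = xh ⬝ᵥ dvec := dotProduct_comm _ _
      simp only [dotProduct_add, add_dotProduct, smul_dotProduct, dotProduct_smul,
        smul_eq_mul, hc]
      ring
    simp only [hterm, hx2, Finset.sum_add_distrib, Finset.sum_sub_distrib,
      ← Finset.mul_sum] at hle
    have h2 : 0 ≤ t * (g + t * q) := by rw [hgdef, hqdef]; nlinarith [hle]
    exact nonneg_of_mul_nonneg_right h2 ht0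
  have hg : 0 ≤ g := seg g q hq0 key
  -- rewrite g into vector form
  have hri : ∀ i, y i - A i *ᵥ xh = ε i - A i *ᵥ e := by
    intro i
    rw [hy i, hedef, Matrix.mulVec_sub]
    abel
  have hdot : ∀ i, (y i - A i *ᵥ xh) ⬝ᵥ (A i *ᵥ dvec)
      = ((A i)ᵀ *ᵥ (y i - A i *ᵥ xh)) ⬝ᵥ dvec := by
    intro i
    rw [Matrix.mulVec_transpose, ← Matrix.dotProduct_mulVec]
  have hvec : ∑ i ∈ Finset.Icc 1 n, (A i)ᵀ *ᵥ (y i - A i *ᵥ xh) = z - S *ᵥ e := by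
    rw [hzdef, hSdef, sum_mv, ← Finset.sum_sub_distrib]
    refine Finset.sum_congr rfl fun i _ => ?_
    rw [hri i, Matrix.mulVec_sub, ← Matrix.mulVec_mulVec]
  have hsum2 : ∑ i ∈ Finset.Icc 1 n, ((y i - A i *ᵥ xh) ⬝ᵥ (A i *ᵥ dvec))
      = (z - S *ᵥ e) ⬝ᵥ dvec := by
    calc ∑ i ∈ Finset.Icc 1 n, ((y i - A i *ᵥ xh) ⬝ᵥ (A i *ᵥ dvec))
        = ∑ i ∈ Finset.Icc 1 n, (((A i)ᵀ *ᵥ (y i - A i *ᵥ xh)) ⬝ᵥ dvec) :=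
          Finset.sum_congr rfl fun i _ => hdot i
      _ = (∑ i ∈ Finset.Icc 1 n, (A i)ᵀ *ᵥ (y i - A i *ᵥ xh)) ⬝ᵥ dvec := (sum_dp _ _).symm
      _ = (z - S *ᵥ e) ⬝ᵥ dvec := by rw [hvec]
  have hdv : dvec = -e := by rw [hddef, hedef, neg_sub]
  have hxhe : xh = e + xstar := by rw [hedef]; abel
  have hVI : e ⬝ᵥ (Mbar *ᵥ e) ≤ e ⬝ᵥ z - lam * (e ⬝ᵥ xstar) := by
    have hM_e : e ⬝ᵥ (Mbar *ᵥ e) = e ⬝ᵥ (S *ᵥ e) + lam * (e ⬝ᵥ e) := by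
      rw [hMbar, Matrix.add_mulVec, Matrix.smul_mulVec, Matrix.one_mulVec,
        dotProduct_add, dotProduct_smul, smul_eq_mul]
    have h1 : xh ⬝ᵥ dvec = -(e ⬝ᵥ e) - (e ⬝ᵥ xstar) := by
      rw [hdv, hxhe, dotProduct_neg, add_dotProduct, dotProduct_comm xstar e]
      ring
    have h2 : (z - S *ᵥ e) ⬝ᵥ dvec = -(e ⬝ᵥ z) + e ⬝ᵥ (S *ᵥ e) := by
      rw [hdv, dotProduct_neg, sub_dotProduct, dotProduct_comm z e,
        dotProduct_comm (S *ᵥ e) e]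
      ring
    rw [hgdef, hsum2, h1, h2] at hg
    rw [hM_e]
    nlinarith [hg]
  -- Cauchy–Schwarz applications
  have hcs1 : e ⬝ᵥ z ≤ Real.sqrt (e ⬝ᵥ (Mbar *ᵥ e)) * Real.sqrt (z ⬝ᵥ (Mbar⁻¹ *ᵥ z)) := by
    have h1 : Mbar *ᵥ (Mbar⁻¹ *ᵥ z) = z := by
      rw [Matrix.mulVec_mulVec, hMinv, Matrix.one_mulVec]
    have h2 := cs hMpd.posSemidef e (Mbar⁻¹ *ᵥ z)
    rw [h1, dotProduct_comm (Mbar⁻¹ *ᵥ z) z] at h2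
    exact h2
  have hcs2 : -(e ⬝ᵥ xstar)
      ≤ Real.sqrt (e ⬝ᵥ (Mbar *ᵥ e)) * Real.sqrt (xstar ⬝ᵥ (Mbar⁻¹ *ᵥ xstar)) := by
    have h1 : Mbar *ᵥ (Mbar⁻¹ *ᵥ (-xstar)) = -xstar := by
      rw [Matrix.mulVec_mulVec, hMinv, Matrix.one_mulVec]
    have h2 := cs hMpd.posSemidef e (Mbar⁻¹ *ᵥ (-xstar))
    rw [h1] at h2
    have h3 : (Mbar⁻¹ *ᵥ (-xstar)) ⬝ᵥ (-xstar) = xstar ⬝ᵥ (Mbar⁻¹ *ᵥ xstar) := by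
      rw [Matrix.mulVec_neg, neg_dotProduct, dotProduct_neg, neg_neg, dotProduct_comm]
    rw [h3, dotProduct_neg] at h2
    exact h2
  set c1 := Real.sqrt (z ⬝ᵥ (Mbar⁻¹ *ᵥ z)) with hc1def
  set c2 := Real.sqrt (xstar ⬝ᵥ (Mbar⁻¹ *ᵥ xstar)) with hc2def
  have hc1 : 0 ≤ c1 := Real.sqrt_nonneg _
  have hc2 : 0 ≤ c2 := Real.sqrt_nonneg _
  have hsa : Real.sqrt (e ⬝ᵥ (Mbar *ᵥ e)) * Real.sqrt (e ⬝ᵥ (Mbar *ᵥ e))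
      = e ⬝ᵥ (Mbar *ᵥ e) := Real.mul_self_sqrt ha0
  have hfin : e ⬝ᵥ (Mbar *ᵥ e) ≤ Real.sqrt (e ⬝ᵥ (Mbar *ᵥ e)) * (c1 + lam * c2) := by
    have h6 := mul_le_mul_of_nonneg_left hcs2 hlam.le
    calc e ⬝ᵥ (Mbar *ᵥ e) ≤ e ⬝ᵥ z - lam * (e ⬝ᵥ xstar) := hVI
      _ = e ⬝ᵥ z + lam * (-(e ⬝ᵥ xstar)) := by ring
      _ ≤ Real.sqrt (e ⬝ᵥ (Mbar *ᵥ e)) * c1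
          + lam * (Real.sqrt (e ⬝ᵥ (Mbar *ᵥ e)) * c2) := add_le_add hcs1 h6
      _ = Real.sqrt (e ⬝ᵥ (Mbar *ᵥ e)) * (c1 + lam * c2) := by ring
  nlinarith [Real.sqrt_nonneg (e ⬝ᵥ (Mbar *ᵥ e)), hsa, hfin, hc1, hc2,
    mul_nonneg hlam.le hc2]
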